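/- Theorem 1 (finite-valued form, minimality of causal states): let Y⃖, Y⃗ be random variables on a common probability space taking values in finite types. Let S = ε(Y⃖) be a statistic of the past such that Y⃗ and Y⃖ are conditionally independent given S and such that the map sending each value σ of S with P(S = σ) > 0 to the conditional distribution of Y⃗ given S = σ is injective. Let R = ρ(Y⃖) be any statistic of the past such that Y⃗ and Y⃖ are conditionally independent given R. Then H[S | R] = 0 and H[S] ≤ H[R]. -/
import Mathlib


open MeasureTheory Real
open scoped Classical

/-- Probability of an event. -/
noncomputable def pr {Ω : Type*} [MeasurableSpace Ω] (μ : Measure Ω) (A : Set Ω) : ℝ :=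
  (μ A).toReal

/-- Conditional probability of `A` given `B`. -/
noncomputable def cpr {Ω : Type*} [MeasurableSpace Ω] (μ : Measure Ω) (A B : Set Ω) : ℝ :=
  pr μ (A ∩ B) / pr μ B

/-- `X` and `W` are conditionally independent given `Z` (finite-valued form):
for all values, `P(X = x ∧ W = w ∧ Z = z) ⬝ P(Z = z) = P(X = x ∧ Z = z) ⬝ P(W = w ∧ Z = z)`. -/
def CondIndepGiven {Ω α β γ : Type*} [MeasurableSpace Ω] (μ : Measure Ω)
    (X : Ω → α) (Z : Ω → γ) (W : Ω → β) : Prop :=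
  ∀ (x : α) (z : γ) (w : β),
    pr μ {ω | X ω = x ∧ W ω = w ∧ Z ω = z} * pr μ {ω | Z ω = z} =
      pr μ {ω | X ω = x ∧ Z ω = z} * pr μ {ω | W ω = w ∧ Z ω = z}

/-- Shannon entropy (in nats) of a finite-valued random variable. -/
noncomputable def ent {Ω α : Type*} [MeasurableSpace Ω] [Fintype α]
    (μ : Measure Ω) (X : Ω → α) : ℝ :=
  -∑ x, pr μ {ω | X ω = x} * Real.log (pr μ {ω | X ω = x})

/-- Shannon entropy of the conditional distribution of `X` given the event `E`. -/
noncomputable def condEntEvent {Ω α : Type*} [MeasurableSpace Ω] [Fintype α]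
    (μ : Measure Ω) (X : Ω → α) (E : Set Ω) : ℝ :=
  -∑ x, cpr μ {ω | X ω = x} E * Real.log (cpr μ {ω | X ω = x} E)

/-- Conditional Shannon entropy `H[X | Y]` of finite-valued random variables. -/
noncomputable def condEnt {Ω α β : Type*} [MeasurableSpace Ω] [Fintype α] [Fintype β]
    (μ : Measure Ω) (X : Ω → α) (Y : Ω → β) : ℝ :=
  ∑ y, pr μ {ω | Y ω = y} * condEntEvent μ X {ω | Y ω = y}

/-- Mutual information `I[X ; Y] = H[X] - H[X | Y]`. -/
noncomputable def mutInfo {Ω α β : Type*} [MeasurableSpace Ω] [Fintype α] [Fintype β]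
    (μ : Measure Ω) (X : Ω → α) (Y : Ω → β) : ℝ :=
  ent μ X - condEnt μ X Y

section Aux

variable {Ω A : Type*} [MeasurableSpace Ω]

lemma pr_nonneg (μ : Measure Ω) (E : Set Ω) : 0 ≤ pr μ E := ENNReal.toReal_nonneg

lemma pr_mono (μ : Measure Ω) [IsProbabilityMeasure μ] {E F : Set Ω} (h : E ⊆ F) :
    pr μ E ≤ pr μ F :=
  ENNReal.toReal_mono (measure_ne_top μ F) (measure_mono h)

lemma pr_fiber_sum [MeasurableSpace A] [DiscreteMeasurableSpace A] [Fintype A]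
    (μ : Measure Ω) [IsProbabilityMeasure μ] (Y : Ω → A) (hY : Measurable Y) (T : Finset A) :
    pr μ {ω | Y ω ∈ T} = ∑ a ∈ T, pr μ {ω | Y ω = a} := by
  unfold pr
  rw [show {ω | Y ω ∈ T} = ⋃ a ∈ T, {ω | Y ω = a} by ext ω; simp]
  rw [measure_biUnion_finset ?_ ?_]
  · rw [ENNReal.toReal_sum]
    intro a _
    exact measure_ne_top μ _
  · intro a _ b _ hab
    refine Set.disjoint_left.2 ?_
    intro ω h1 h2
    exact hab (h1.symm.trans h2)
  · intro a _
    exact hY (MeasurableSet.singleton a)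

/-- A sufficient statistic has the same conditional future distribution as the past itself. -/
lemma suff_cpr {B C : Type*} [MeasurableSpace A]
    (μ : Measure Ω) [IsProbabilityMeasure μ]
    (Ypast : Ω → A) (Yfut : Ω → B) (f : A → C)
    (hsuff : CondIndepGiven μ Yfut (fun ω => f (Ypast ω)) Ypast)
    {a : A} (ha : 0 < pr μ {ω | Ypast ω = a}) (y : B) :
    cpr μ {ω | Yfut ω = y} {ω | Ypast ω = a} =
      cpr μ {ω | Yfut ω = y} {ω | f (Ypast ω) = f a} := by
  have h := hsuff y (f a) a
  have e1 : {ω | Yfut ω = y ∧ Ypast ω = a ∧ f (Ypast ω) = f a}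
      = {ω | Yfut ω = y} ∩ {ω | Ypast ω = a} := by
    ext ω; simp only [Set.mem_setOf_eq, Set.mem_inter_iff]
    constructor
    · rintro ⟨h1, h2, _⟩; exact ⟨h1, h2⟩
    · rintro ⟨h1, h2⟩; exact ⟨h1, h2, by rw [h2]⟩
  have e2 : {ω | Ypast ω = a ∧ f (Ypast ω) = f a} = {ω | Ypast ω = a} := by
    ext ω; simp only [Set.mem_setOf_eq]
    constructor
    · rintro ⟨h1, _⟩; exact h1
    · intro h1; exact ⟨h1, by rw [h1]⟩
  have e3 : {ω | Yfut ω = y ∧ f (Ypast ω) = f a}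
      = {ω | Yfut ω = y} ∩ {ω | f (Ypast ω) = f a} := by
    ext ω; simp [Set.mem_inter_iff]
  rw [e1, e2, e3] at h
  have hz : 0 < pr μ {ω | f (Ypast ω) = f a} :=
    lt_of_lt_of_le ha (pr_mono μ (fun ω hω => by simp only [Set.mem_setOf_eq] at *; rw [hω]))
  unfold cpr
  rw [div_eq_div_iff (ne_of_gt ha) (ne_of_gt hz)]
  linarith [h]

end Aux

/-- Theorem 1, finite-valued form: minimality of causal states.
Let `S = ε ∘ Ypast` be a sufficient statistic of the past for the future (`Yfut` and `Ypast`
conditionally independent given `S`) whose values of positive probability have pairwise distinct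
conditional future distributions, and let `R = ρ ∘ Ypast` be any other sufficient statistic.
Then `H[S | R] = 0` and `H[S] ≤ H[R]`. -/
theorem causal_states_minimal_sufficient
    {Ω A B C D : Type*} [MeasurableSpace Ω]
    [MeasurableSpace A] [DiscreteMeasurableSpace A] [Fintype A] [Nonempty A]
    [MeasurableSpace B] [DiscreteMeasurableSpace B] [Fintype B] [Nonempty B]
    [MeasurableSpace C] [DiscreteMeasurableSpace C] [Fintype C] [Nonempty C]
    [MeasurableSpace D] [DiscreteMeasurableSpace D] [Fintype D] [Nonempty D]
    (μ : Measure Ω) [IsProbabilityMeasure μ]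
    (Ypast : Ω → A) (Yfut : Ω → B) (hYpast : Measurable Ypast) (hYfut : Measurable Yfut)
    (ε : A → C) (ρ : A → D)
    (hSsuff : CondIndepGiven μ Yfut (fun ω => ε (Ypast ω)) Ypast)
    (hinj : ∀ σ σ' : C,
      0 < pr μ {ω | ε (Ypast ω) = σ} → 0 < pr μ {ω | ε (Ypast ω) = σ'} →
      (∀ y : B, cpr μ {ω | Yfut ω = y} {ω | ε (Ypast ω) = σ} =
        cpr μ {ω | Yfut ω = y} {ω | ε (Ypast ω) = σ'}) → σ = σ')
    (hRsuff : CondIndepGiven μ Yfut (fun ω => ρ (Ypast ω)) Ypast) :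
    condEnt μ (fun ω => ε (Ypast ω)) (fun ω => ρ (Ypast ω)) = 0 ∧
      ent μ (fun ω => ε (Ypast ω)) ≤ ent μ (fun ω => ρ (Ypast ω)) := by
  classical
  set S : Ω → C := fun ω => ε (Ypast ω) with hS
  set R : Ω → D := fun ω => ρ (Ypast ω) with hR
  set p : A → ℝ := fun a => pr μ {ω | Ypast ω = a} with hp
  -- key: on positive-probability pasts, ρ determines ε
  have hkey : ∀ a a', 0 < p a → 0 < p a' → ρ a = ρ a' → ε a = ε a' := by
    intro a a' ha ha' hρ
    have hsa : 0 < pr μ {ω | ε (Ypast ω) = ε a} :=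
      lt_of_lt_of_le ha (pr_mono μ (fun ω hω => by
        simp only [Set.mem_setOf_eq] at *; rw [hω]))
    have hsa' : 0 < pr μ {ω | ε (Ypast ω) = ε a'} :=
      lt_of_lt_of_le ha' (pr_mono μ (fun ω hω => by
        simp only [Set.mem_setOf_eq] at *; rw [hω]))
    refine hinj (ε a) (ε a') hsa hsa' ?_
    intro y
    calc cpr μ {ω | Yfut ω = y} {ω | ε (Ypast ω) = ε a}
        = cpr μ {ω | Yfut ω = y} {ω | Ypast ω = a} :=
          (suff_cpr μ Ypast Yfut ε hSsuff ha y).symm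
      _ = cpr μ {ω | Yfut ω = y} {ω | ρ (Ypast ω) = ρ a} :=
          suff_cpr μ Ypast Yfut ρ hRsuff ha y
      _ = cpr μ {ω | Yfut ω = y} {ω | ρ (Ypast ω) = ρ a'} := by rw [hρ]
      _ = cpr μ {ω | Yfut ω = y} {ω | Ypast ω = a'} :=
          (suff_cpr μ Ypast Yfut ρ hRsuff ha' y).symm
      _ = cpr μ {ω | Yfut ω = y} {ω | ε (Ypast ω) = ε a'} :=
          suff_cpr μ Ypast Yfut ε hSsuff ha' y
  -- a map g with g ∘ ρ = ε on positive-probability pasts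
  obtain ⟨g, hg⟩ : ∃ g : D → C, ∀ a, 0 < p a → g (ρ a) = ε a := by
    refine ⟨fun d => if h : ∃ a, ρ a = d ∧ 0 < p a then ε h.choose
      else Classical.arbitrary C, ?_⟩
    intro a ha
    have h : ∃ a', ρ a' = ρ a ∧ 0 < p a' := ⟨a, rfl, ha⟩
    simp only [dif_pos h]
    exact hkey h.choose a h.choose_spec.2 ha h.choose_spec.1
  set q : D → ℝ := fun d => pr μ {ω | ρ (Ypast ω) = d} with hq
  set s : C → ℝ := fun c => pr μ {ω | ε (Ypast ω) = c} with hs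
  set j : C → D → ℝ :=
    fun c d => pr μ ({ω | ε (Ypast ω) = c} ∩ {ω | ρ (Ypast ω) = d}) with hj
  have hps : ∀ a, 0 ≤ p a := fun a => pr_nonneg μ _
  have hqs : ∀ d, 0 ≤ q d := fun d => pr_nonneg μ _
  have hq_sum : ∀ d, q d = ∑ a ∈ Finset.univ.filter (fun a => ρ a = d), p a := by
    intro d
    have : {ω | ρ (Ypast ω) = d}
        = {ω | Ypast ω ∈ Finset.univ.filter (fun a => ρ a = d)} := by
      ext ω; simp
    rw [hq]; simp only; rw [this, pr_fiber_sum μ Ypast hYpast]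
  have hs_sum : ∀ c, s c = ∑ a ∈ Finset.univ.filter (fun a => ε a = c), p a := by
    intro c
    have : {ω | ε (Ypast ω) = c}
        = {ω | Ypast ω ∈ Finset.univ.filter (fun a => ε a = c)} := by
      ext ω; simp
    rw [hs]; simp only; rw [this, pr_fiber_sum μ Ypast hYpast]
  have hj_sum : ∀ c d, j c d
      = ∑ a ∈ Finset.univ.filter (fun a => ε a = c ∧ ρ a = d), p a := by
    intro c d
    have : {ω | ε (Ypast ω) = c} ∩ {ω | ρ (Ypast ω) = d}
        = {ω | Ypast ω ∈ Finset.univ.filter (fun a => ε a = c ∧ ρ a = d)} := by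
      ext ω; simp
    rw [hj]; simp only; rw [this, pr_fiber_sum μ Ypast hYpast]
  -- off-diagonal joint probabilities vanish
  have hjz : ∀ c d, c ≠ g d → j c d = 0 := by
    intro c d hcd
    rw [hj_sum]
    refine Finset.sum_eq_zero ?_
    intro a ha
    simp only [Finset.mem_filter, Finset.mem_univ, true_and] at ha
    by_contra hpa
    have hpa' : 0 < p a := lt_of_le_of_ne (hps a) (Ne.symm hpa)
    exact hcd (by rw [← ha.1, ← hg a hpa', ha.2])
  have hjq : ∀ d, j (g d) d = q d := by
    intro d
    rw [hj_sum, hq_sum]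
    refine Finset.sum_subset ?_ ?_
    · intro a ha
      simp only [Finset.mem_filter, Finset.mem_univ, true_and] at *
      exact ha.2
    · intro a ha hna
      simp only [Finset.mem_filter, Finset.mem_univ, true_and] at ha hna
      by_contra hpa
      have hpa' : 0 < p a := lt_of_le_of_ne (hps a) (Ne.symm hpa)
      exact hna ⟨by rw [← hg a hpa', ha], ha⟩
  -- s is the fiberwise sum of q
  have hsq : ∀ c, s c = ∑ d ∈ Finset.univ.filter (fun d => g d = c), q d := by
    intro c
    have h1 : ∑ d ∈ Finset.univ.filter (fun d => g d = c), q d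
        = ∑ a ∈ Finset.univ.filter (fun a => g (ρ a) = c), p a := by
      simp only [hq_sum]
      rw [Finset.sum_fiberwise_eq_sum_filter Finset.univ
        (Finset.univ.filter (fun d => g d = c)) ρ p]
      refine Finset.sum_congr ?_ (fun _ _ => rfl)
      ext a; simp
    rw [h1, hs_sum]
    rw [Finset.sum_filter, Finset.sum_filter]
    refine Finset.sum_congr rfl ?_
    intro a _
    rcases eq_or_lt_of_le (hps a) with h0 | h0
    · by_cases h1 : ε a = c <;> by_cases h2 : g (ρ a) = c <;> simp [h1, h2, ← h0]
    · rw [hg a h0]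
  constructor
  · -- conditional entropy vanishes
    unfold condEnt
    refine Finset.sum_eq_zero ?_
    intro d _
    rcases eq_or_lt_of_le (hqs d) with h0 | h0
    · rw [show pr μ {ω | R ω = d} = q d from rfl, ← h0, zero_mul]
    · have hE : condEntEvent μ S {ω | R ω = d} = 0 := by
        unfold condEntEvent
        rw [neg_eq_zero]
        refine Finset.sum_eq_zero ?_
        intro c _
        have hcpr : cpr μ {ω | S ω = c} {ω | R ω = d} = j c d / q d := rfl
        by_cases hc : c = g d
        · rw [hcpr, hc, hjq d, div_self (ne_of_gt h0)]
          simp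
        · rw [hcpr, hjz c d hc, zero_div]
          simp
      rw [hE, mul_zero]
  · -- entropy inequality
    unfold ent
    rw [neg_le_neg_iff]
    have hprS : ∀ c, pr μ {ω | S ω = c} = s c := fun c => rfl
    have hprR : ∀ d, pr μ {ω | R ω = d} = q d := fun d => rfl
    simp only [hprS, hprR]
    rw [← Finset.sum_fiberwise Finset.univ g (fun d => q d * Real.log (q d))]
    refine Finset.sum_le_sum ?_
    intro c _
    have hqle : ∀ d ∈ Finset.univ.filter (fun d => g d = c), q d ≤ s c := by
      intro d hd
      rw [hsq c]
      exact Finset.single_le_sum (fun d _ => hqs d) hd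
    calc ∑ d ∈ Finset.univ.filter (fun d => g d = c), q d * Real.log (q d)
        ≤ ∑ d ∈ Finset.univ.filter (fun d => g d = c), q d * Real.log (s c) := by
          refine Finset.sum_le_sum ?_
          intro d hd
          rcases eq_or_lt_of_le (hqs d) with h0 | h0
          · rw [← h0, zero_mul, zero_mul]
          · exact mul_le_mul_of_nonneg_left
              (Real.log_le_log h0 (hqle d hd)) (hqs d)
      _ = s c * Real.log (s c) := by
          rw [← Finset.sum_mul, ← hsq c]
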